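/- Let Π = (δ, Σ, C) be an LCL problem. Let R be the smallest collection of nonempty subsets of Σ such that {σ} ∈ R for every σ ∈ Σ, and such that for all r_1, …, r_δ ∈ R, if the set r = {σ ∈ Σ : there is a configuration (σ : c_1, …, c_δ) ∈ C with c_i ∈ r_i for every i} is nonempty, then r ∈ R. Then Π has a uniform certificate for O(log* n) solvability with label set Σ_T = Σ (of some depth d ≥ 1) if and only if C ≠ ∅ and Σ ∈ R. -/

import Mathlib

/-- The set of configurations `C` is closed under permutations of the children. -/
def PermClosed {L : Type*} (δ : ℕ) (C : Set (L × (Fin δ → L))) : Prop :=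
  ∀ (σ : L) (c : Fin δ → L) (π : Equiv.Perm (Fin δ)), (σ, c) ∈ C → (σ, c ∘ π) ∈ C

/-- A labeling `T` of the complete `δ`-ary tree of depth `d` (vertices are words
over `Fin δ` of length at most `d`) is correct w.r.t. the configurations `C`. -/
def CorrectLabeling {L : Type*} (δ : ℕ) (C : Set (L × (Fin δ → L))) (d : ℕ)
    (T : List (Fin δ) → L) : Prop :=
  ∀ w : List (Fin δ), w.length < d → (T w, fun j : Fin δ => T (w ++ [j])) ∈ C

/-- A uniform certificate for `O(log* n)` solvability with label set `ST` and
depth `d ≥ 1`. -/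
def UniformCert {L : Type*} (δ : ℕ) (C : Set (L × (Fin δ → L))) (ST : Set L)
    (d : ℕ) : Prop :=
  1 ≤ d ∧
  ∃ T : L → List (Fin δ) → L,
    (∀ σ ∈ ST, CorrectLabeling δ C d (T σ)) ∧
    (∀ σ ∈ ST, ∀ w : List (Fin δ), w.length ≤ d → T σ w ∈ ST) ∧
    (∀ σ ∈ ST, ∀ σ' ∈ ST, ∀ w : List (Fin δ), w.length = d → T σ w = T σ' w) ∧
    (∀ σ ∈ ST, T σ [] = σ)

/-- The smallest collection `R` of nonempty subsets of `Σ` containing all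
singletons and closed under the following rule: for `r₁, …, r_δ ∈ R`, if the set
`r = {σ | ∃ (σ : c₁, …, c_δ) ∈ C with cᵢ ∈ rᵢ for all i}` is nonempty then
`r ∈ R`. -/
inductive CertSets {L : Type*} (δ : ℕ) (C : Set (L × (Fin δ → L))) : Set L → Prop
  | single (σ : L) : CertSets δ C {σ}
  | step (r : Fin δ → Set L) (h : ∀ i, CertSets δ C (r i))
      (hne : {σ : L | ∃ c : Fin δ → L, (σ, c) ∈ C ∧ ∀ i, c i ∈ r i}.Nonempty) :
      CertSets δ C {σ : L | ∃ c : Fin δ → L, (σ, c) ∈ C ∧ ∀ i, c i ∈ r i}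

namespace Stmt8Aux

variable {L : Type*} {δ : ℕ}

def Qset (C : Set (L × (Fin δ → L))) (T0 : List (Fin δ) → L) : ℕ → List (Fin δ) → Set L
  | 0, w => {T0 w}
  | n+1, w => {σ : L | ∃ c : Fin δ → L, (σ, c) ∈ C ∧ ∀ i, c i ∈ Qset C T0 n (w ++ [i])}

lemma mem_Qset {C : Set (L × (Fin δ → L))} {d : ℕ} {T : L → List (Fin δ) → L} (σ₀ : L)
    (hcorr : ∀ σ, CorrectLabeling δ C d (T σ))
    (hleaf : ∀ σ σ' : L, ∀ w : List (Fin δ), w.length = d → T σ w = T σ' w) :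
    ∀ (n : ℕ) (w : List (Fin δ)), w.length + n = d → ∀ σ, T σ w ∈ Qset C (T σ₀) n w := by
  intro n
  induction n with
  | zero =>
      intro w hw σ
      simpa [Qset] using hleaf σ σ₀ w (by omega)
  | succ n ih =>
      intro w hw σ
      exact ⟨fun j => T σ (w ++ [j]), hcorr σ w (by omega),
        fun i => ih (w ++ [i])
          (by simp only [List.length_append, List.length_cons, List.length_nil]; omega) σ⟩

lemma certSets_Qset {C : Set (L × (Fin δ → L))} {d : ℕ} {T : L → List (Fin δ) → L} (σ₀ : L)
    (hcorr : ∀ σ, CorrectLabeling δ C d (T σ))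
    (hleaf : ∀ σ σ' : L, ∀ w : List (Fin δ), w.length = d → T σ w = T σ' w) :
    ∀ (n : ℕ) (w : List (Fin δ)), w.length + n = d → CertSets δ C (Qset C (T σ₀) n w) := by
  intro n
  induction n with
  | zero => intro w _; exact CertSets.single (T σ₀ w)
  | succ n ih =>
      intro w hw
      have hne : (Qset C (T σ₀) (n+1) w).Nonempty :=
        ⟨T σ₀ w, mem_Qset σ₀ hcorr hleaf (n+1) w hw σ₀⟩
      exact CertSets.step (fun i => Qset C (T σ₀) n (w ++ [i]))
        (fun i => ih (w ++ [i])
          (by simp only [List.length_append, List.length_cons, List.length_nil]; omega)) hne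

def IsCert (C : Set (L × (Fin δ → L))) (r : Set L) (d : ℕ) (T : L → List (Fin δ) → L) : Prop :=
  (∀ σ ∈ r, T σ [] = σ) ∧
  (∀ σ ∈ r, CorrectLabeling δ C d (T σ)) ∧
  (∀ σ ∈ r, ∀ σ' ∈ r, ∀ w : List (Fin δ), w.length = d → T σ w = T σ' w)

lemma pad {C : Set (L × (Fin δ → L))} (hδ : 1 ≤ δ) (f : L → Fin δ → L)
    (hf : ∀ τ, (τ, f τ) ∈ C) {r : Set L} {d : ℕ} {T : L → List (Fin δ) → L}
    (hT : IsCert C r d T) : ∃ T' : L → List (Fin δ) → L, IsCert C r (d+1) T' := by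
  obtain ⟨hroot, hcorr, hleaf⟩ := hT
  set i0 : Fin δ := ⟨0, hδ⟩
  refine ⟨fun σ w => if w.length ≤ d then T σ w else f (T σ w.dropLast) (w.getLastD i0),
    ?_, ?_, ?_⟩
  · intro σ hσ
    simpa using hroot σ hσ
  · intro σ hσ w hw
    by_cases h : w.length < d
    · have h1 : (fun j : Fin δ => if (w ++ [j]).length ≤ d then T σ (w ++ [j])
          else f (T σ (w ++ [j]).dropLast) ((w ++ [j]).getLastD i0)) =
          fun j => T σ (w ++ [j]) := by
        funext j
        rw [if_pos (by simp; omega)]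
      simp only [if_pos h.le, h1]
      exact hcorr σ hσ w h
    · have hd : w.length = d := by omega
      have h1 : (fun j : Fin δ => if (w ++ [j]).length ≤ d then T σ (w ++ [j])
          else f (T σ (w ++ [j]).dropLast) ((w ++ [j]).getLastD i0)) = f (T σ w) := by
        funext j
        rw [if_neg (by simp; omega), List.dropLast_concat, List.getLastD_concat]
      simp only [if_pos hd.le, h1]
      exact hf (T σ w)
  · intro σ hσ σ' hσ' w hw
    have h1 : ¬ w.length ≤ d := by omega
    simp only [if_neg h1]
    rw [hleaf σ hσ σ' hσ' w.dropLast (by simp [hw])]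

lemma padTo {C : Set (L × (Fin δ → L))} (hδ : 1 ≤ δ) (f : L → Fin δ → L)
    (hf : ∀ τ, (τ, f τ) ∈ C) {r : Set L} {d D : ℕ} (hdD : d ≤ D)
    (h : ∃ T : L → List (Fin δ) → L, IsCert C r d T) :
    ∃ T : L → List (Fin δ) → L, IsCert C r D T := by
  induction hdD with
  | refl => exact h
  | step hle ih =>
      obtain ⟨T, hT⟩ := ih
      exact pad hδ f hf hT

lemma cert_of_certSets {C : Set (L × (Fin δ → L))} (hδ : 1 ≤ δ) (f : L → Fin δ → L)
    (hf : ∀ τ, (τ, f τ) ∈ C) {r : Set L} (h : CertSets δ C r) :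
    ∃ (d : ℕ) (T : L → List (Fin δ) → L), IsCert C r d T := by
  induction h with
  | single σ =>
      refine ⟨0, fun τ _ => τ, fun τ _ => rfl, fun τ _ w hw => by omega, ?_⟩
      rintro τ rfl τ' hτ' w hw
      simp_all
  | step r hr hne ih =>
      choose dfun Tfun hTfun using ih
      set D : ℕ := Finset.univ.sup dfun with hD
      have hpad : ∀ i, ∃ T : L → List (Fin δ) → L, IsCert C (r i) D T := fun i =>
        padTo hδ f hf (Finset.le_sup (Finset.mem_univ i)) ⟨Tfun i, hTfun i⟩
      choose T' hT' using hpad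
      classical
      have hsel : ∀ σ : L, ∃ c : Fin δ → L,
          σ ∈ {σ : L | ∃ c : Fin δ → L, (σ, c) ∈ C ∧ ∀ i, c i ∈ r i} →
            ((σ, c) ∈ C ∧ ∀ i, c i ∈ r i) := by
        intro σ
        by_cases hσ : σ ∈ {σ : L | ∃ c : Fin δ → L, (σ, c) ∈ C ∧ ∀ i, c i ∈ r i}
        · obtain ⟨c, hc⟩ := hσ
          exact ⟨c, fun _ => hc⟩
        · exact ⟨f σ, fun h => absurd h hσ⟩
      choose cfun hcspec using hsel
      refine ⟨D + 1, fun σ w => match w with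
        | [] => σ
        | i :: w' => T' i (cfun σ i) w', fun σ _ => rfl, ?_, ?_⟩
      · intro σ hσ w hw
        match w with
        | [] =>
            have h1 : (fun j : Fin δ => T' j (cfun σ j) ([] : List (Fin δ))) = cfun σ := by
              funext j
              exact (hT' j).1 (cfun σ j) ((hcspec σ hσ).2 j)
            show (σ, fun j : Fin δ => T' j (cfun σ j) []) ∈ C
            rw [h1]
            exact (hcspec σ hσ).1
        | i :: w' =>
            have hlen : w'.length < D := by simp at hw; omega
            exact (hT' i).2.1 (cfun σ i) ((hcspec σ hσ).2 i) w' hlen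
      · intro σ hσ σ' hσ' w hw
        match w with
        | i :: w' =>
            have hlen : w'.length = D := by simp at hw; omega
            exact (hT' i).2.2 (cfun σ i) ((hcspec σ hσ).2 i) (cfun σ' i)
              ((hcspec σ' hσ').2 i) w' hlen

lemma exists_config {C : Set (L × (Fin δ → L))} (hC : C.Nonempty)
    (h : CertSets δ C Set.univ) : ∀ τ : L, ∃ c : Fin δ → L, (τ, c) ∈ C := by
  have key : ∀ s : Set L, CertSets δ C s → s = Set.univ → ∀ τ : L, ∃ c : Fin δ → L, (τ, c) ∈ C := by
    intro s hs
    induction hs with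
    | single σ =>
        intro hσuniv τ
        obtain ⟨⟨a, c⟩, hac⟩ := hC
        have h1 : τ ∈ ({σ} : Set L) := hσuniv ▸ Set.mem_univ τ
        have h2 : a ∈ ({σ} : Set L) := hσuniv ▸ Set.mem_univ a
        refine ⟨c, ?_⟩
        rwa [show τ = a from h1.trans h2.symm]
    | step r hr hne ih =>
        intro hsuniv τ
        have : τ ∈ {σ : L | ∃ c : Fin δ → L, (σ, c) ∈ C ∧ ∀ i, c i ∈ r i} :=
          hsuniv ▸ Set.mem_univ τ
        obtain ⟨c, hc, -⟩ := this
        exact ⟨c, hc⟩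
  exact key Set.univ h rfl

end Stmt8Aux

/-- an LCL problem `Π = (δ, Σ, C)` has a uniform certificate for
`O(log* n)` solvability with label set `Σ_T = Σ` (of some depth `d ≥ 1`) if and
only if `C ≠ ∅` and `Σ ∈ R`. -/
theorem stmt8 {L : Type*} [Fintype L] [Nonempty L] (δ : ℕ) (hδ : 1 ≤ δ)
    (C : Set (L × (Fin δ → L))) (hperm : PermClosed δ C) :
    (∃ d : ℕ, UniformCert δ C Set.univ d) ↔
      (C.Nonempty ∧ CertSets δ C Set.univ) := by
  constructor
  · rintro ⟨d, hd, T, hcorr, -, hleaf, hroot⟩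
    have σ₀ : L := Classical.arbitrary L
    have hcorr' : ∀ σ, CorrectLabeling δ C d (T σ) := fun σ => hcorr σ (Set.mem_univ σ)
    have hleaf' : ∀ σ σ' : L, ∀ w : List (Fin δ), w.length = d → T σ w = T σ' w :=
      fun σ σ' w hw => hleaf σ (Set.mem_univ σ) σ' (Set.mem_univ σ') w hw
    refine ⟨⟨(T σ₀ [], fun j => T σ₀ ([] ++ [j])), hcorr' σ₀ [] (by simp; omega)⟩, ?_⟩
    have hQ : Stmt8Aux.Qset C (T σ₀) d [] = Set.univ := by
      apply Set.eq_univ_of_forall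
      intro σ
      have h1 := Stmt8Aux.mem_Qset σ₀ hcorr' hleaf' d [] (by simp) σ
      rwa [hroot σ (Set.mem_univ σ)] at h1
    rw [← hQ]
    exact Stmt8Aux.certSets_Qset σ₀ hcorr' hleaf' d [] (by simp)
  · rintro ⟨hC, hU⟩
    have hex := Stmt8Aux.exists_config hC hU
    choose f hf using hex
    obtain ⟨d, T, hT⟩ := Stmt8Aux.cert_of_certSets hδ f hf hU
    obtain ⟨T', hroot', hcorr', hleaf'⟩ := Stmt8Aux.pad hδ f hf hT
    exact ⟨d + 1, Nat.le_add_left 1 d, T', hcorr',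
      fun _ _ _ _ => Set.mem_univ _, hleaf', hroot'⟩
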